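/- For the GHZ state ψ = (1/√d) ∑_j |jjj⟩, any splitting H_C = H_{C_L} ⊗ H_{C_R} and any purification U_C ψ of ρ_AB satisfies S(AC_L) ≥ log d, with equality achievable; consequently E_P(A:B) = log d and g(A:B) = 2 log d − log d = log d. -/

import Mathlib

open scoped Classical ComplexOrder
open Matrix

/-- von Neumann entropy of a (Hermitian) matrix, via its spectrum. -/
noncomputable def vnEntropy {n : Type*} [Fintype n] [DecidableEq n]
    (ρ : Matrix n n ℂ) : ℝ :=
  if h : ρ.IsHermitian then -∑ i, h.eigenvalues i * Real.log (h.eigenvalues i) else 0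

/-- Reduced density matrix of a bipartite pure state `ψ : α × β → ℂ` on `α`. -/
noncomputable def redDM {α β : Type*} [Fintype β] (ψ : α × β → ℂ) : Matrix α α ℂ :=
  Matrix.of fun a a' => ∑ b, ψ (a, b) * (starRingEnd ℂ) (ψ (a', b))

/-- Entanglement entropy of the subsystem `α` for the bipartite pure state `ψ`. -/
noncomputable def SE {α β : Type*} [Fintype α] [DecidableEq α] [Fintype β]
    (ψ : α × β → ℂ) : ℝ := vnEntropy (redDM ψ)

/-- Reduced density matrix `ρ_AB` of a tripartite pure state. -/
noncomputable def rhoAB {nA nB nC : ℕ} (ψ : Fin nA × Fin nB × Fin nC → ℂ) :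
    Matrix (Fin nA × Fin nB) (Fin nA × Fin nB) ℂ :=
  Matrix.of fun p q =>
    ∑ c, ψ (p.1, p.2, c) * (starRingEnd ℂ) (ψ (q.1, q.2, c))

/-- The GHZ state `(1/√d) ∑ⱼ |jjj⟩` on `(ℂ^d)^{⊗3}`. -/
noncomputable def ghz (d : ℕ) : Fin d × Fin d × Fin d → ℂ :=
  fun p => if p.1 = p.2.1 ∧ p.2.1 = p.2.2 then ((Real.sqrt d)⁻¹ : ℂ) else 0

/- ---------- auxiliary lemmas ---------- -/

lemma redDM_posSemidef {α β : Type*} [Fintype α] [Fintype β] (ψ : α × β → ℂ) :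
    (redDM ψ).PosSemidef := by
  have : redDM ψ = (Matrix.of fun a b => ψ (a, b)) *
      (Matrix.of fun a b => ψ (a, b)).conjTranspose := by
    ext a a'
    simp [redDM, Matrix.mul_apply, Matrix.conjTranspose_apply]
  rw [this]
  exact Matrix.posSemidef_self_mul_conjTranspose _

lemma redDM_quadForm {α β : Type*} [Fintype α] [Fintype β] (ψ : α × β → ℂ) (v : α → ℂ) :
    dotProduct (star v) ((redDM ψ).mulVec v) =
      ∑ b, (Complex.normSq (∑ a, (starRingEnd ℂ) (v a) * ψ (a, b)) : ℂ) := by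
  have hM : redDM ψ = (Matrix.of fun a b => ψ (a, b)) *
      (Matrix.of fun a b => ψ (a, b)).conjTranspose := by
    ext a a'
    simp [redDM, Matrix.mul_apply, Matrix.conjTranspose_apply]
  rw [hM, ← Matrix.mulVec_mulVec, dotProduct_mulVec]
  have h2 : Matrix.vecMul (star v) (Matrix.of fun a b => ψ (a, b)) =
      fun b => ∑ a, (starRingEnd ℂ) (v a) * ψ (a, b) := by
    funext b
    simp [Matrix.vecMul, dotProduct, RCLike.star_def]
  have h3 : (Matrix.of fun a b => ψ (a, b)).conjTranspose.mulVec v =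
      fun b => ∑ a, (starRingEnd ℂ) (ψ (a, b)) * v a := by
    funext b
    simp [Matrix.mulVec, dotProduct, Matrix.conjTranspose_apply]
  rw [h2, h3]
  refine Finset.sum_congr rfl fun b _ => ?_
  rw [← Complex.mul_conj]
  congr 1
  simp [map_sum, mul_comm]

lemma sum_eigenvalues_eq_trace {n : Type*} [Fintype n] [DecidableEq n]
    {A : Matrix n n ℂ} (hA : A.IsHermitian) :
    (∑ i, (hA.eigenvalues i : ℂ)) = A.trace := by
  exact hA.trace_eq_sum_eigenvalues.symm

lemma eigenvalues_smul_one {n : Type*} [Fintype n] [DecidableEq n]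
    (c : ℝ) (h : (((c : ℂ) • 1 : Matrix n n ℂ)).IsHermitian) (i : n) :
    h.eigenvalues i = c := by
  have hm := h.mulVec_eigenvectorBasis i
  rw [Matrix.smul_mulVec, Matrix.one_mulVec] at hm
  have hv : (⇑(h.eigenvectorBasis i) : n → ℂ) ≠ 0 := by
    have := h.eigenvectorBasis.orthonormal.ne_zero i
    intro hz
    apply this
    ext x
    exact congrFun hz x
  obtain ⟨x, hx⟩ := Function.ne_iff.mp hv
  have hx2 := congrFun hm x
  simp only [Pi.smul_apply, smul_eq_mul, Complex.real_smul] at hx2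
  have : (c : ℂ) = (h.eigenvalues i : ℂ) := mul_right_cancel₀ hx hx2
  exact_mod_cast this.symm

lemma rhoAB_ghz (d : ℕ) (p q : Fin d × Fin d) :
    rhoAB (ghz d) p q =
      if p.1 = p.2 ∧ q.1 = q.2 ∧ p.2 = q.2 then ((d : ℂ))⁻¹ else 0 := by
  have hval : ((Real.sqrt d)⁻¹ : ℂ) * (starRingEnd ℂ) ((Real.sqrt d)⁻¹ : ℂ) = (d : ℂ)⁻¹ := by
    rw [map_inv₀, Complex.conj_ofReal, ← mul_inv, ← Complex.ofReal_mul,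
      Real.mul_self_sqrt (Nat.cast_nonneg d)]
    push_cast
    ring
  have hterm : ∀ c : Fin d,
      ghz d (p.1, p.2, c) * (starRingEnd ℂ) (ghz d (q.1, q.2, c)) =
        if c = p.2 ∧ (p.1 = p.2 ∧ q.1 = q.2 ∧ p.2 = q.2) then (d : ℂ)⁻¹ else 0 := by
    intro c
    simp only [ghz]
    by_cases h1 : p.1 = p.2 ∧ p.2 = c
    · by_cases h2 : q.1 = q.2 ∧ q.2 = c
      · rw [if_pos h1, if_pos h2,
          if_pos ⟨h1.2.symm, h1.1, h2.1, h1.2.trans h2.2.symm⟩]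
        exact hval
      · rw [if_pos h1, if_neg h2, map_zero, mul_zero, if_neg]
        rintro ⟨hc, hp, hq, hpq⟩
        exact h2 ⟨hq, hpq.symm.trans h1.2⟩
    · rw [if_neg h1, zero_mul, if_neg]
      rintro ⟨hc, hp, hq, hpq⟩
      exact h1 ⟨hp, hc.symm⟩
  show (∑ c, ghz d (p.1, p.2, c) * (starRingEnd ℂ) (ghz d (q.1, q.2, c))) = _
  rw [Finset.sum_congr rfl fun c _ => hterm c]
  by_cases hP : p.1 = p.2 ∧ q.1 = q.2 ∧ p.2 = q.2 <;> simp [hP]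

theorem ghz_entanglement_of_purification (d : ℕ) (hd : 0 < d) :
    (∀ (nL nR : ℕ) (φ : Fin d × Fin d × Fin nL × Fin nR → ℂ),
        (∀ p q : Fin d × Fin d,
          (∑ l : Fin nL, ∑ r : Fin nR,
              φ (p.1, p.2, l, r) * (starRingEnd ℂ) (φ (q.1, q.2, l, r))) =
            rhoAB (ghz d) p q) →
        Real.log d ≤
          SE (fun p : (Fin d × Fin nL) × (Fin d × Fin nR) =>
            φ (p.1.1, p.2.1, p.1.2, p.2.2))) ∧
    (∃ (nL nR : ℕ) (φ : Fin d × Fin d × Fin nL × Fin nR → ℂ),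
        (∀ p q : Fin d × Fin d,
          (∑ l : Fin nL, ∑ r : Fin nR,
              φ (p.1, p.2, l, r) * (starRingEnd ℂ) (φ (q.1, q.2, l, r))) =
            rhoAB (ghz d) p q) ∧
        SE (fun p : (Fin d × Fin nL) × (Fin d × Fin nR) =>
            φ (p.1.1, p.2.1, p.1.2, p.2.2)) = Real.log d) := by
  have hd0 : (d : ℝ) ≠ 0 := Nat.cast_ne_zero.mpr hd.ne'
  constructor
  · -- lower bound
    intro nL nR φ hpur
    set Φ : (Fin d × Fin nL) × (Fin d × Fin nR) → ℂ :=
      fun p => φ (p.1.1, p.2.1, p.1.2, p.2.2) with hΦ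
    have hPSD : (redDM Φ).PosSemidef := redDM_posSemidef Φ
    have hH : (redDM Φ).IsHermitian := hPSD.1
    -- norm facts about φ
    have hnorm : ∀ a b : Fin d, (∑ l : Fin nL, ∑ r : Fin nR,
        Complex.normSq (φ (a, b, l, r))) = if a = b then (d : ℝ)⁻¹ else 0 := by
      intro a b
      have h1 := hpur (a, b) (a, b)
      rw [rhoAB_ghz d] at h1
      have h2 : (∑ l : Fin nL, ∑ r : Fin nR,
          φ (a, b, l, r) * (starRingEnd ℂ) (φ (a, b, l, r))) =
          ((∑ l : Fin nL, ∑ r : Fin nR, Complex.normSq (φ (a, b, l, r)) : ℝ) : ℂ) := by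
        push_cast
        exact Finset.sum_congr rfl fun l _ => Finset.sum_congr rfl fun r _ =>
          (Complex.mul_conj _)
      rw [h2] at h1
      rcases eq_or_ne a b with hab | hab
      · subst hab
        simp only [and_self, if_true] at h1 ⊢
        rw [show ((d : ℂ))⁻¹ = (((d : ℝ)⁻¹ : ℝ) : ℂ) by push_cast; ring] at h1
        exact Complex.ofReal_inj.mp h1
      · simp only [hab, if_false, false_and] at h1 ⊢
        exact_mod_cast h1
    have hzero : ∀ a b : Fin d, a ≠ b → ∀ l r, φ (a, b, l, r) = 0 := by
      intro a b hab l r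
      have h1 := hnorm a b
      rw [if_neg hab] at h1
      have h2 := (Finset.sum_eq_zero_iff_of_nonneg
        (fun l _ => Finset.sum_nonneg fun r _ => Complex.normSq_nonneg _)).mp h1
      have h3 := h2 l (Finset.mem_univ l)
      rw [Finset.sum_eq_zero_iff_of_nonneg (fun r _ => Complex.normSq_nonneg _)] at h3
      exact Complex.normSq_eq_zero.mp (h3 r (Finset.mem_univ r))
    -- trace is 1
    have htr : (∑ i, hH.eigenvalues i) = 1 := by
      have h1 : (∑ i, (hH.eigenvalues i : ℂ)) = (redDM Φ).trace :=
        sum_eigenvalues_eq_trace hH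
      have h2 : (redDM Φ).trace = ((∑ a : Fin d, ∑ b : Fin d, ∑ l : Fin nL, ∑ r : Fin nR,
          Complex.normSq (φ (a, b, l, r)) : ℝ) : ℂ) := by
        rw [Matrix.trace]
        push_cast
        rw [Fintype.sum_prod_type]
        refine Finset.sum_congr rfl fun a _ => ?_
        rw [Finset.sum_comm]
        refine Finset.sum_congr rfl fun l _ => ?_
        show (∑ y : Fin d × Fin nR, Φ ((a, l), y) * (starRingEnd ℂ) (Φ ((a, l), y))) = _
        rw [Fintype.sum_prod_type]
        exact Finset.sum_congr rfl fun b _ => Finset.sum_congr rfl fun r _ =>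
          (Complex.mul_conj _)
      have h3 : (∑ a : Fin d, ∑ b : Fin d, ∑ l : Fin nL, ∑ r : Fin nR,
          Complex.normSq (φ (a, b, l, r))) = 1 := by
        have hA : ∀ a : Fin d, (∑ b : Fin d, ∑ l : Fin nL, ∑ r : Fin nR,
            Complex.normSq (φ (a, b, l, r))) = (d : ℝ)⁻¹ := by
          intro a
          rw [Finset.sum_congr rfl fun b _ => hnorm a b]
          simp
        rw [Finset.sum_congr rfl fun a _ => hA a, Finset.sum_const]
        simp only [Finset.card_univ, Fintype.card_fin, nsmul_eq_mul]
        field_simp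
      rw [h2, h3] at h1
      exact_mod_cast h1
    have hnn : ∀ i, 0 ≤ hH.eigenvalues i := fun i => hPSD.eigenvalues_nonneg i
    -- each eigenvalue is at most 1/d
    have hub : ∀ i, hH.eigenvalues i ≤ (d : ℝ)⁻¹ := by
      intro i
      set v : (Fin d × Fin nL) → ℂ := ⇑(hH.eigenvectorBasis i) with hv
      have heq := hH.eigenvalues_eq i
      have hq := redDM_quadForm Φ v
      have hu : ∀ y : Fin d × Fin nR,
          (∑ x : Fin d × Fin nL, (starRingEnd ℂ) (v x) * Φ (x, y)) =
          ∑ l : Fin nL, (starRingEnd ℂ) (v (y.1, l)) * φ (y.1, y.1, l, y.2) := by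
        intro y
        rw [Fintype.sum_prod_type]
        refine Finset.sum_eq_single_of_mem y.1 (Finset.mem_univ _) ?_
        intro a _ ha
        refine Finset.sum_eq_zero fun l _ => ?_
        rw [show Φ ((a, l), y) = φ (a, y.1, l, y.2) from rfl,
          hzero a y.1 ha l y.2, mul_zero]
      have hCS : ∀ y : Fin d × Fin nR,
          Complex.normSq (∑ l : Fin nL, (starRingEnd ℂ) (v (y.1, l)) * φ (y.1, y.1, l, y.2)) ≤
          (∑ l : Fin nL, Complex.normSq (v (y.1, l))) *
            (∑ l : Fin nL, Complex.normSq (φ (y.1, y.1, l, y.2))) := by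
        intro y
        have h1 : ‖∑ l : Fin nL, (starRingEnd ℂ) (v (y.1, l)) * φ (y.1, y.1, l, y.2)‖ ≤
            ∑ l : Fin nL, ‖v (y.1, l)‖ * ‖φ (y.1, y.1, l, y.2)‖ :=
          (norm_sum_le _ _).trans (le_of_eq (Finset.sum_congr rfl fun l _ => by
            rw [norm_mul, RCLike.norm_conj]))
        calc Complex.normSq (∑ l : Fin nL, (starRingEnd ℂ) (v (y.1, l)) * φ (y.1, y.1, l, y.2))
            = ‖∑ l : Fin nL, (starRingEnd ℂ) (v (y.1, l)) * φ (y.1, y.1, l, y.2)‖ ^ 2 := by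
              rw [Complex.normSq_eq_norm_sq]
          _ ≤ (∑ l : Fin nL, ‖v (y.1, l)‖ * ‖φ (y.1, y.1, l, y.2)‖) ^ 2 :=
              pow_le_pow_left₀ (norm_nonneg _) h1 2
          _ ≤ (∑ l : Fin nL, ‖v (y.1, l)‖ ^ 2) * (∑ l : Fin nL, ‖φ (y.1, y.1, l, y.2)‖ ^ 2) :=
              Finset.sum_mul_sq_le_sq_mul_sq _ _ _
          _ = (∑ l : Fin nL, Complex.normSq (v (y.1, l))) *
              (∑ l : Fin nL, Complex.normSq (φ (y.1, y.1, l, y.2))) := by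
              simp [Complex.normSq_eq_norm_sq]
      have hv1 : (∑ x : Fin d × Fin nL, Complex.normSq (v x)) = 1 := by
        have hn := hH.eigenvectorBasis.orthonormal.1 i
        rw [EuclideanSpace.norm_eq, Real.sqrt_eq_one] at hn
        rw [← hn]
        refine Finset.sum_congr rfl fun x _ => ?_
        rw [Complex.normSq_eq_norm_sq]
      have hsum : hH.eigenvalues i = ∑ y : Fin d × Fin nR,
          Complex.normSq (∑ x : Fin d × Fin nL, (starRingEnd ℂ) (v x) * Φ (x, y)) := by
        rw [heq]
        rw [show (star v ⬝ᵥ redDM Φ *ᵥ v) =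
          ∑ y, (Complex.normSq (∑ x, (starRingEnd ℂ) (v x) * Φ (x, y)) : ℂ) from hq]
        rw [← Complex.ofReal_sum]
        simp
      rw [hsum, Finset.sum_congr rfl fun y _ => congrArg Complex.normSq (hu y)]
      calc (∑ y : Fin d × Fin nR, Complex.normSq
              (∑ l : Fin nL, (starRingEnd ℂ) (v (y.1, l)) * φ (y.1, y.1, l, y.2)))
          ≤ ∑ y : Fin d × Fin nR, (∑ l : Fin nL, Complex.normSq (v (y.1, l))) *
              (∑ l : Fin nL, Complex.normSq (φ (y.1, y.1, l, y.2))) :=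
            Finset.sum_le_sum fun y _ => hCS y
        _ = ∑ b : Fin d, (∑ l : Fin nL, Complex.normSq (v (b, l))) *
              (∑ r : Fin nR, ∑ l : Fin nL, Complex.normSq (φ (b, b, l, r))) := by
            rw [Fintype.sum_prod_type]
            refine Finset.sum_congr rfl fun b _ => ?_
            conv_rhs => rw [Finset.mul_sum]
        _ = ∑ b : Fin d, (∑ l : Fin nL, Complex.normSq (v (b, l))) * (d : ℝ)⁻¹ := by
            refine Finset.sum_congr rfl fun b _ => ?_
            rw [Finset.sum_comm]
            rw [hnorm b b, if_pos rfl]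
        _ = (∑ b : Fin d, ∑ l : Fin nL, Complex.normSq (v (b, l))) * (d : ℝ)⁻¹ := by
            rw [Finset.sum_mul]
        _ = (d : ℝ)⁻¹ := by
            rw [show (∑ b : Fin d, ∑ l : Fin nL, Complex.normSq (v (b, l)))
              = ∑ x : Fin d × Fin nL, Complex.normSq (v x) from
              (Fintype.sum_prod_type (f := fun x : Fin d × Fin nL =>
                Complex.normSq (v x))).symm, hv1, one_mul]
    -- conclude
    show Real.log d ≤ vnEntropy (redDM Φ)
    unfold vnEntropy
    rw [dif_pos hH]
    have key : ∀ i, hH.eigenvalues i * Real.log d ≤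
        -(hH.eigenvalues i * Real.log (hH.eigenvalues i)) := by
      intro i
      rcases eq_or_lt_of_le (hnn i) with h0 | h0
      · rw [← h0]
        simp
      · have hlog : Real.log (hH.eigenvalues i) ≤ Real.log ((d : ℝ)⁻¹) :=
          Real.log_le_log h0 (hub i)
        rw [Real.log_inv] at hlog
        nlinarith
    calc Real.log d = (∑ i, hH.eigenvalues i) * Real.log d := by rw [htr, one_mul]
      _ = ∑ i, hH.eigenvalues i * Real.log d := Finset.sum_mul _ _ _
      _ ≤ ∑ i, -(hH.eigenvalues i * Real.log (hH.eigenvalues i)) :=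
          Finset.sum_le_sum fun i _ => key i
      _ = -∑ i, hH.eigenvalues i * Real.log (hH.eigenvalues i) := by
          rw [Finset.sum_neg_distrib]
  · -- achievability
    refine ⟨1, d, fun x => ghz d (x.1, x.2.1, x.2.2.2), ?_, ?_⟩
    · intro p q
      show (∑ l : Fin 1, ∑ r : Fin d,
          ghz d (p.1, p.2, r) * (starRingEnd ℂ) (ghz d (q.1, q.2, r))) = _
      rw [Fin.sum_univ_one]
      rfl
    · set Φ₂ : (Fin d × Fin 1) × (Fin d × Fin d) → ℂ :=
        fun p => ghz d (p.1.1, p.2.1, p.2.2) with hΦ₂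
      have hred : redDM Φ₂ =
          (((d : ℝ)⁻¹ : ℝ) : ℂ) • (1 : Matrix (Fin d × Fin 1) (Fin d × Fin 1) ℂ) := by
        ext x x'
        show (∑ y : Fin d × Fin d, Φ₂ (x, y) * (starRingEnd ℂ) (Φ₂ (x', y))) = _
        rw [Fintype.sum_prod_type]
        have hb : ∀ b : Fin d, (∑ r : Fin d, Φ₂ (x, (b, r)) * (starRingEnd ℂ) (Φ₂ (x', (b, r))))
            = if x.1 = b ∧ x'.1 = b then (d : ℂ)⁻¹ else 0 := by
          intro b
          have := rhoAB_ghz d (x.1, b) (x'.1, b)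
          rw [show rhoAB (ghz d) (x.1, b) (x'.1, b) =
            ∑ r : Fin d, Φ₂ (x, (b, r)) * (starRingEnd ℂ) (Φ₂ (x', (b, r))) from rfl] at this
          rw [this]
          simp
        rw [Finset.sum_congr rfl fun b _ => hb b]
        have hxx : (x = x') ↔ (x.1 = x'.1) := by
          constructor
          · intro h; rw [h]
          · intro h; exact Prod.ext h (Subsingleton.elim _ _)
        rcases eq_or_ne x.1 x'.1 with hx | hx
        · rw [Finset.sum_eq_single x.1]
          · simp [hx, Matrix.one_apply, hxx.mpr hx]
          · intro b _ hb2
            rw [if_neg]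
            rintro ⟨h1, -⟩
            exact hb2 h1.symm
          · intro h
            exact absurd (Finset.mem_univ _) h
        · rw [Finset.sum_eq_zero]
          · simp [Matrix.one_apply, hxx, hx]
          · intro b _
            rw [if_neg]
            rintro ⟨h1, h2⟩
            exact hx (h1.trans h2.symm)
      show vnEntropy (redDM Φ₂) = Real.log d
      rw [hred]
      have hH2 : ((((d : ℝ)⁻¹ : ℝ) : ℂ) • (1 : Matrix (Fin d × Fin 1) (Fin d × Fin 1) ℂ)).IsHermitian := by
        rw [← hred]
        exact (redDM_posSemidef Φ₂).1
      unfold vnEntropy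
      rw [dif_pos hH2]
      rw [Finset.sum_congr rfl fun i _ => by
        rw [eigenvalues_smul_one ((d : ℝ)⁻¹) hH2 i]]
      rw [Finset.sum_const]
      simp only [Finset.card_univ, Fintype.card_prod, Fintype.card_fin, Fintype.card_unique,
        mul_one, nsmul_eq_mul, Real.log_inv]
      field_simp
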